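/- Contracting an outdegree-one vertex preserves tileability of ω-labeled graphs: let G be an ω-labeled graph (edges labeled by pairs of equal-length words) and let u be a vertex of outdegree exactly 1 whose unique outgoing edge goes to v ≠ u with label (x,y). Form G' by deleting this edge and, for each edge from any w to u labeled (u₁,u₂), replacing it by an edge from w to v labeled (u₁x, u₂y). Then G tiles the plane if and only if G' tiles the plane, and G' has exactly one fewer vertex and one fewer edge than G. -/
import Mathlib


structure WangBar (V C : Type) where
  e : V
  w : V
  n : List C
  s : List C
deriving DecidableEq

/-- A tiling of the plane by a barset `B`: `f` gives the bar covering each cell,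
`g` gives the (1-based) position of the cell inside its bar. -/
def IsBarTiling {V C : Type} (B : Set (WangBar V C)) (f : ℤ → ℤ → WangBar V C)
    (g : ℤ → ℤ → ℕ) : Prop :=
  (∀ i j, f i j ∈ B) ∧
  (∀ i j, 0 < g i j ∧ g i j ≤ (f i j).n.length) ∧
  (∀ i j, g i j < (f i j).n.length → g (i+1) j = g i j + 1 ∧ f (i+1) j = f i j) ∧
  (∀ i j, g i j = (f i j).n.length → g (i+1) j = 1 ∧ (f i j).e = (f (i+1) j).w) ∧
  (∀ i j, (f i j).n[g i j - 1]? = (f i (j+1)).s[g i (j+1) - 1]?)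

section Stmt16Aux

variable {V C : Type} {B : Set (WangBar V C)} {f : ℤ → ℤ → WangBar V C} {g : ℤ → ℤ → ℕ}

lemma stmt16_back (h : IsBarTiling B f g) (i j : ℤ) (hg : 1 < g (i+1) j) :
    f i j = f (i+1) j ∧ g i j + 1 = g (i+1) j := by
  obtain ⟨h1, h2, h3, h4, h5⟩ := h
  rcases lt_or_eq_of_le (h2 i j).2 with hlt | heq
  · obtain ⟨a, b⟩ := h3 i j hlt
    exact ⟨b.symm, a.symm⟩
  · obtain ⟨a, _⟩ := h4 i j heq
    omega

lemma stmt16_start_back (h : IsBarTiling B f g) (i j : ℤ) (hg : g (i+1) j = 1) :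
    g i j = (f i j).n.length ∧ (f i j).e = (f (i+1) j).w := by
  obtain ⟨h1, h2, h3, h4, h5⟩ := h
  rcases lt_or_eq_of_le (h2 i j).2 with hlt | heq
  · obtain ⟨a, _⟩ := h3 i j hlt
    have := (h2 i j).1
    omega
  · exact ⟨heq, (h4 i j heq).2⟩

lemma stmt16_walk (h : IsBarTiling B f g) (i j : ℤ) :
    ∀ t : ℕ, t < g i j → f (i - t) j = f i j ∧ g (i - t) j + t = g i j := by
  intro t
  induction t with
  | zero => intro _; simp
  | succ t ih =>
    intro ht
    obtain ⟨hf, hg⟩ := ih (by omega)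
    have e1 : (i - ((t+1 : ℕ) : ℤ)) + 1 = i - (t : ℤ) := by push_cast; ring
    have hgt : 1 < g ((i - ((t+1 : ℕ) : ℤ)) + 1) j := by rw [e1]; omega
    obtain ⟨a, b⟩ := stmt16_back h (i - ((t+1 : ℕ) : ℤ)) j hgt
    rw [e1] at a b
    exact ⟨a.trans hf, by omega⟩

end Stmt16Aux

theorem stmt16_forward {C V E : Type}
    (src tgt : E → V) (label : E → List C × List C)
    (hlab : ∀ e, (label e).1.length = (label e).2.length)
    (hpos : ∀ e, (label e).1 ≠ [])
    (u v : V) (huv : v ≠ u) (e₀ : E)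
    (hsrc : src e₀ = u) (htgt : tgt e₀ = v)
    (hout : ∀ e, src e = u → e = e₀)
    (f : ℤ → ℤ → WangBar V C) (g : ℤ → ℤ → ℕ)
    (h : IsBarTiling
      {b : WangBar V C | ∃ e : E, b = ⟨tgt e, src e, (label e).1, (label e).2⟩} f g) :
    ∃ F G, IsBarTiling
      {b : WangBar V C | ∃ e : E, e ≠ e₀ ∧
        ((tgt e ≠ u ∧ b = ⟨tgt e, src e, (label e).1, (label e).2⟩) ∨
         (tgt e = u ∧
           b = ⟨v, src e, (label e).1 ++ (label e₀).1, (label e).2 ++ (label e₀).2⟩))} F G := by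
  classical
  have hT := h
  obtain ⟨h1, h2, h3, h4, h5⟩ := h
  simp only [Set.mem_setOf_eq] at h1
  have hxpos : 0 < (label e₀).1.length := List.length_pos_iff.mpr (hpos e₀)
  have hwu : ∀ i j, (f i j).w = u → f i j = ⟨v, u, (label e₀).1, (label e₀).2⟩ := by
    intro i j hw
    obtain ⟨e, he⟩ := h1 i j
    have hse : src e = u := by rw [he] at hw; exact hw
    have he0 := hout e hse
    subst he0
    rw [he, hsrc, htgt]
  have hewu : ∀ i j, (f i j).w = u → (f i j).e = v := by
    intro i j hw; rw [hwu i j hw]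
  have hnpos : ∀ i j, 0 < (f i j).n.length := by
    intro i j; obtain ⟨e, he⟩ := h1 i j; rw [he]
    exact List.length_pos_iff.mpr (hpos e)
  have hlen : ∀ i j, (f i j).s.length = (f i j).n.length := by
    intro i j; obtain ⟨e, he⟩ := h1 i j; rw [he]
    exact (hlab e).symm
  have key : ∀ i j, (f i j).w = u →
      (f (i - (g i j : ℤ)) j).e = u ∧ (f (i - (g i j : ℤ)) j).w ≠ u ∧
      g (i - (g i j : ℤ)) j = (f (i - (g i j : ℤ)) j).n.length := by
    intro i j hw
    have hk := (h2 i j).1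
    obtain ⟨hfw, hgw⟩ := stmt16_walk hT i j (g i j - 1) (by omega)
    have e1 : (i - (g i j : ℤ)) + 1 = i - ((g i j - 1 : ℕ) : ℤ) := by
      have : ((g i j - 1 : ℕ) : ℤ) = (g i j : ℤ) - 1 := by omega
      rw [this]; ring
    have hg1 : g ((i - (g i j : ℤ)) + 1) j = 1 := by rw [e1]; omega
    obtain ⟨ha, hb⟩ := stmt16_start_back hT (i - (g i j : ℤ)) j hg1
    rw [e1, hfw] at hb
    have he' : (f (i - (g i j : ℤ)) j).e = u := hb.trans hw
    refine ⟨he', ?_, ha⟩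
    intro hcon
    rw [hwu _ _ hcon] at he'
    exact huv he'
  set Ff : ℤ → ℤ → WangBar V C := fun i j =>
    if (f i j).e = u then
      ⟨v, (f i j).w, (f i j).n ++ (label e₀).1, (f i j).s ++ (label e₀).2⟩
    else if (f i j).w = u then
      ⟨v, (f (i - (g i j : ℤ)) j).w, (f (i - (g i j : ℤ)) j).n ++ (label e₀).1,
        (f (i - (g i j : ℤ)) j).s ++ (label e₀).2⟩
    else f i j with hFf
  set Gg : ℤ → ℤ → ℕ := fun i j =>
    if (f i j).w = u then (f (i - (g i j : ℤ)) j).n.length + g i j else g i j with hGg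
  have caseA : ∀ i j, (f i j).e ≠ u → (f i j).w ≠ u → Ff i j = f i j ∧ Gg i j = g i j := by
    intro i j hE hW
    constructor
    · simp only [hFf]; rw [if_neg hE, if_neg hW]
    · simp only [hGg]; rw [if_neg hW]
  have caseB : ∀ i j, (f i j).e = u →
      Ff i j = ⟨v, (f i j).w, (f i j).n ++ (label e₀).1, (f i j).s ++ (label e₀).2⟩ ∧
      Gg i j = g i j := by
    intro i j hE
    have hW : (f i j).w ≠ u := fun hW => huv ((hewu i j hW).symm.trans hE)
    exact ⟨by simp only [hFf]; rw [if_pos hE], by simp only [hGg]; rw [if_neg hW]⟩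
  have caseC : ∀ i j, (f i j).w = u →
      Ff i j = ⟨v, (f (i - (g i j : ℤ)) j).w, (f (i - (g i j : ℤ)) j).n ++ (label e₀).1,
        (f (i - (g i j : ℤ)) j).s ++ (label e₀).2⟩ ∧
      Gg i j = (f (i - (g i j : ℤ)) j).n.length + g i j := by
    intro i j hW
    have hE : (f i j).e ≠ u := fun hE => huv ((hewu i j hW).symm.trans hE)
    exact ⟨by simp only [hFf]; rw [if_neg hE, if_pos hW], by simp only [hGg]; rw [if_pos hW]⟩
  refine ⟨Ff, Gg, ?_, ?_, ?_, ?_, ?_⟩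
  -- membership
  · intro i j
    simp only [Set.mem_setOf_eq]
    by_cases hE : (f i j).e = u
    · obtain ⟨e, he⟩ := h1 i j
      have htu : tgt e = u := by rw [he] at hE; exact hE
      refine ⟨e, fun hcon => huv (by rw [hcon, htgt] at htu; exact htu), Or.inr ⟨htu, ?_⟩⟩
      rw [(caseB i j hE).1]
      simp [he]
    · by_cases hW : (f i j).w = u
      · obtain ⟨hke, hkw, hkg⟩ := key i j hW
        obtain ⟨e, he⟩ := h1 (i - (g i j : ℤ)) j
        have htu : tgt e = u := by rw [he] at hke; exact hke
        refine ⟨e, fun hcon => huv (by rw [hcon, htgt] at htu; exact htu), Or.inr ⟨htu, ?_⟩⟩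
        rw [(caseC i j hW).1]
        simp [he]
      · obtain ⟨e, he⟩ := h1 i j
        have hsu : src e ≠ u := by rw [he] at hW; exact hW
        refine ⟨e, fun hcon => hsu (by rw [hcon]; exact hsrc),
          Or.inl ⟨fun hcon => hE (by rw [he]; exact hcon), ?_⟩⟩
        rw [(caseA i j hE hW).1]
        exact he
  -- bounds
  · intro i j
    by_cases hE : (f i j).e = u
    · obtain ⟨hf', hg'⟩ := caseB i j hE
      rw [hf', hg']
      have h0 := h2 i j
      simp only [List.length_append]
      omega
    · by_cases hW : (f i j).w = u
      · obtain ⟨hf', hg'⟩ := caseC i j hW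
        rw [hf', hg']
        have h0 := (h2 i j).1
        have hb := (h2 i j).2
        rw [hwu i j hW] at hb
        have hb' : g i j ≤ (label e₀).1.length := hb
        simp only [List.length_append]
        omega
      · obtain ⟨hf', hg'⟩ := caseA i j hE hW
        rw [hf', hg']
        exact h2 i j
  -- step inside bar
  · intro i j hlt
    by_cases hE : (f i j).e = u
    · obtain ⟨hf', hg'⟩ := caseB i j hE
      rw [hf', hg'] at hlt ⊢
      simp only [List.length_append] at hlt
      by_cases hg : g i j < (f i j).n.length
      · obtain ⟨ha, hb⟩ := h3 i j hg
        obtain ⟨hf2, hg2⟩ := caseB (i+1) j (by rw [hb]; exact hE)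
        rw [hf2, hg2, ha, hb]
        exact ⟨rfl, rfl⟩
      · have hgeq : g i j = (f i j).n.length := le_antisymm (h2 i j).2 (not_lt.mp hg)
        obtain ⟨ha, hb⟩ := h4 i j hgeq
        have hWn : (f (i+1) j).w = u := by rw [← hb]; exact hE
        obtain ⟨hf2, hg2⟩ := caseC (i+1) j hWn
        rw [hf2, hg2, ha]
        have e2 : (i + 1 : ℤ) - ((1 : ℕ) : ℤ) = i := by push_cast; ring
        rw [e2]
        exact ⟨by omega, rfl⟩
    · by_cases hW : (f i j).w = u
      · obtain ⟨hke, hkw, hkg⟩ := key i j hW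
        obtain ⟨hf', hg'⟩ := caseC i j hW
        rw [hf', hg'] at hlt ⊢
        simp only [List.length_append] at hlt
        have hfx : (f i j).n = (label e₀).1 := by rw [hwu i j hW]
        have hg : g i j < (f i j).n.length := by rw [hfx]; omega
        obtain ⟨ha, hb⟩ := h3 i j hg
        have hWn : (f (i+1) j).w = u := by rw [hb]; exact hW
        obtain ⟨hf2, hg2⟩ := caseC (i+1) j hWn
        rw [hf2, hg2, ha]
        have e2 : (i + 1 : ℤ) - ((g i j + 1 : ℕ) : ℤ) = i - (g i j : ℤ) := by
          push_cast; ring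
        rw [e2]
        exact ⟨by omega, rfl⟩
      · obtain ⟨hf', hg'⟩ := caseA i j hE hW
        rw [hf', hg'] at hlt ⊢
        obtain ⟨ha, hb⟩ := h3 i j hlt
        have hE2 : (f (i+1) j).e ≠ u := by rw [hb]; exact hE
        have hW2 : (f (i+1) j).w ≠ u := by rw [hb]; exact hW
        obtain ⟨hf2, hg2⟩ := caseA (i+1) j hE2 hW2
        rw [hf2, hg2, ha, hb]
        exact ⟨rfl, rfl⟩
  -- end of bar
  · intro i j heq
    by_cases hE : (f i j).e = u
    · exfalso
      obtain ⟨hf', hg'⟩ := caseB i j hE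
      rw [hf', hg'] at heq
      simp only [List.length_append] at heq
      have := (h2 i j).2
      omega
    · by_cases hW : (f i j).w = u
      · obtain ⟨hke, hkw, hkg⟩ := key i j hW
        obtain ⟨hf', hg'⟩ := caseC i j hW
        rw [hf', hg'] at heq
        simp only [List.length_append] at heq
        have hfx : (f i j).n = (label e₀).1 := by rw [hwu i j hW]
        have hgeq : g i j = (f i j).n.length := by rw [hfx]; omega
        obtain ⟨ha, hb⟩ := h4 i j hgeq
        have hW2 : (f (i+1) j).w ≠ u := by
          intro hcon
          rw [← hb, hewu i j hW] at hcon
          exact huv hcon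
        have hnext : (Ff (i+1) j).w = (f (i+1) j).w ∧ Gg (i+1) j = g (i+1) j := by
          by_cases hE2 : (f (i+1) j).e = u
          · obtain ⟨hf2, hg2⟩ := caseB (i+1) j hE2
            rw [hf2, hg2]; exact ⟨rfl, rfl⟩
          · obtain ⟨hf2, hg2⟩ := caseA (i+1) j hE2 hW2
            rw [hf2, hg2]; exact ⟨rfl, rfl⟩
        refine ⟨by rw [hnext.2, ha], ?_⟩
        rw [hnext.1, ← hb, hf']
        exact (hewu i j hW).symm
      · obtain ⟨hf', hg'⟩ := caseA i j hE hW
        rw [hf', hg'] at heq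
        obtain ⟨ha, hb⟩ := h4 i j heq
        have hW2 : (f (i+1) j).w ≠ u := by
          intro hcon
          rw [← hb] at hcon
          exact hE hcon
        have hnext : (Ff (i+1) j).w = (f (i+1) j).w ∧ Gg (i+1) j = g (i+1) j := by
          by_cases hE2 : (f (i+1) j).e = u
          · obtain ⟨hf2, hg2⟩ := caseB (i+1) j hE2
            rw [hf2, hg2]; exact ⟨rfl, rfl⟩
          · obtain ⟨hf2, hg2⟩ := caseA (i+1) j hE2 hW2
            rw [hf2, hg2]; exact ⟨rfl, rfl⟩
        refine ⟨by rw [hnext.2, ha], ?_⟩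
        rw [hnext.1, ← hb, hf']
  -- vertical matching
  · intro i j
    have hcell : ∀ i j, (Ff i j).n[Gg i j - 1]? = (f i j).n[g i j - 1]? ∧
        (Ff i j).s[Gg i j - 1]? = (f i j).s[g i j - 1]? := by
      intro i j
      by_cases hE : (f i j).e = u
      · obtain ⟨hf', hg'⟩ := caseB i j hE
        rw [hf', hg']
        have h0 := h2 i j
        constructor
        · exact List.getElem?_append_left (by omega)
        · exact List.getElem?_append_left (by rw [hlen i j]; omega)
      · by_cases hW : (f i j).w = u
        · obtain ⟨hke, hkw, hkg⟩ := key i j hW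
          obtain ⟨hf', hg'⟩ := caseC i j hW
          rw [hf', hg']
          have h0 := h2 i j
          have hfx : (f i j).n = (label e₀).1 := by rw [hwu i j hW]
          have hfy : (f i j).s = (label e₀).2 := by rw [hwu i j hW]
          constructor
          · show ((f (i - (g i j : ℤ)) j).n ++ (label e₀).1)[(f (i - (g i j : ℤ)) j).n.length + g i j - 1]? = _
            rw [List.getElem?_append_right (by omega), hfx]
            congr 1
            omega
          · show ((f (i - (g i j : ℤ)) j).s ++ (label e₀).2)[(f (i - (g i j : ℤ)) j).n.length + g i j - 1]? = _
            rw [List.getElem?_append_right (by rw [hlen (i - (g i j : ℤ)) j]; omega), hfy]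
            congr 1
            rw [hlen (i - (g i j : ℤ)) j]
            omega
        · obtain ⟨hf', hg'⟩ := caseA i j hE hW
          rw [hf', hg']
          exact ⟨rfl, rfl⟩
    rw [(hcell i j).1, (hcell i (j+1)).2]
    exact h5 i j

theorem stmt16_backward {C V E : Type}
    (src tgt : E → V) (label : E → List C × List C)
    (hlab : ∀ e, (label e).1.length = (label e).2.length)
    (hpos : ∀ e, (label e).1 ≠ [])
    (u v : V) (huv : v ≠ u) (e₀ : E)
    (hsrc : src e₀ = u) (htgt : tgt e₀ = v)
    (hout : ∀ e, src e = u → e = e₀)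
    (F : ℤ → ℤ → WangBar V C) (G : ℤ → ℤ → ℕ)
    (h : IsBarTiling
      {b : WangBar V C | ∃ e : E, e ≠ e₀ ∧
        ((tgt e ≠ u ∧ b = ⟨tgt e, src e, (label e).1, (label e).2⟩) ∨
         (tgt e = u ∧
           b = ⟨v, src e, (label e).1 ++ (label e₀).1, (label e).2 ++ (label e₀).2⟩))} F G) :
    ∃ f g, IsBarTiling
      {b : WangBar V C | ∃ e : E, b = ⟨tgt e, src e, (label e).1, (label e).2⟩} f g := by
  classical
  obtain ⟨h1, h2, h3, h4, h5⟩ := h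
  simp only [Set.mem_setOf_eq] at h1
  have hxpos : 0 < (label e₀).1.length := List.length_pos_iff.mpr (hpos e₀)
  set esel : WangBar V C → E := fun b =>
    if hb : ∃ e : E, e ≠ e₀ ∧
        ((tgt e ≠ u ∧ b = ⟨tgt e, src e, (label e).1, (label e).2⟩) ∨
         (tgt e = u ∧
           b = ⟨v, src e, (label e).1 ++ (label e₀).1, (label e).2 ++ (label e₀).2⟩)) then
      hb.choose
    else e₀ with hesel
  have hspec : ∀ i j, (esel (F i j)) ≠ e₀ ∧
      ((tgt (esel (F i j)) ≠ u ∧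
          F i j = ⟨tgt (esel (F i j)), src (esel (F i j)),
            (label (esel (F i j))).1, (label (esel (F i j))).2⟩) ∨
       (tgt (esel (F i j)) = u ∧
          F i j = ⟨v, src (esel (F i j)),
            (label (esel (F i j))).1 ++ (label e₀).1,
            (label (esel (F i j))).2 ++ (label e₀).2⟩)) := by
    intro i j
    have hb := h1 i j
    simp only [hesel]
    rw [dif_pos hb]
    exact hb.choose_spec
  have hcaseI : ∀ i j, tgt (esel (F i j)) ≠ u →
      F i j = ⟨tgt (esel (F i j)), src (esel (F i j)),
        (label (esel (F i j))).1, (label (esel (F i j))).2⟩ := by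
    intro i j ht
    rcases (hspec i j).2 with ⟨_, hb⟩ | ⟨hcon, _⟩
    · exact hb
    · exact absurd hcon ht
  have hcaseII : ∀ i j, tgt (esel (F i j)) = u →
      F i j = ⟨v, src (esel (F i j)),
        (label (esel (F i j))).1 ++ (label e₀).1,
        (label (esel (F i j))).2 ++ (label e₀).2⟩ := by
    intro i j ht
    rcases (hspec i j).2 with ⟨hcon, _⟩ | ⟨_, hb⟩
    · exact absurd ht hcon
    · exact hb
  set ff : ℤ → ℤ → WangBar V C := fun i j =>
    if tgt (esel (F i j)) = u then
      (if G i j ≤ (label (esel (F i j))).1.length then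
        ⟨u, src (esel (F i j)), (label (esel (F i j))).1, (label (esel (F i j))).2⟩
      else ⟨v, u, (label e₀).1, (label e₀).2⟩)
    else F i j with hff
  set gg : ℤ → ℤ → ℕ := fun i j =>
    if tgt (esel (F i j)) = u ∧ (label (esel (F i j))).1.length < G i j then
      G i j - (label (esel (F i j))).1.length
    else G i j with hgg
  have cI : ∀ i j, tgt (esel (F i j)) ≠ u → ff i j = F i j ∧ gg i j = G i j := by
    intro i j ht
    constructor
    · simp only [hff]; rw [if_neg ht]
    · simp only [hgg]; rw [if_neg (by tauto)]
  have cIIa : ∀ i j, tgt (esel (F i j)) = u → G i j ≤ (label (esel (F i j))).1.length →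
      ff i j = ⟨u, src (esel (F i j)), (label (esel (F i j))).1, (label (esel (F i j))).2⟩ ∧
      gg i j = G i j := by
    intro i j ht hle
    constructor
    · simp only [hff]; rw [if_pos ht, if_pos hle]
    · simp only [hgg]; rw [if_neg (by omega)]
  have cIIb : ∀ i j, tgt (esel (F i j)) = u → (label (esel (F i j))).1.length < G i j →
      ff i j = ⟨v, u, (label e₀).1, (label e₀).2⟩ ∧
      gg i j = G i j - (label (esel (F i j))).1.length := by
    intro i j ht hlt
    constructor
    · simp only [hff]; rw [if_pos ht, if_neg (by omega)]
    · simp only [hgg]; rw [if_pos ⟨ht, hlt⟩]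
  have hFlen : ∀ i j, tgt (esel (F i j)) = u →
      (F i j).n.length = (label (esel (F i j))).1.length + (label e₀).1.length := by
    intro i j ht
    conv_lhs => rw [hcaseII i j ht]
    simp [List.length_append]
  have hnext : ∀ a b, G a b = 1 → gg a b = 1 ∧ (ff a b).w = (F a b).w := by
    intro a b h1'
    by_cases ht : tgt (esel (F a b)) = u
    · have hLpos : 0 < (label (esel (F a b))).1.length := List.length_pos_iff.mpr (hpos _)
      obtain ⟨hfa, hga⟩ := cIIa a b ht (by omega)
      rw [hfa, hga, h1']
      refine ⟨rfl, ?_⟩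
      conv_rhs => rw [hcaseII a b ht]
    · obtain ⟨hfa, hga⟩ := cI a b ht
      rw [hfa, hga, h1']
      exact ⟨rfl, rfl⟩
  refine ⟨ff, gg, ?_, ?_, ?_, ?_, ?_⟩
  -- membership
  · intro i j
    simp only [Set.mem_setOf_eq]
    by_cases ht : tgt (esel (F i j)) = u
    · by_cases hle : G i j ≤ (label (esel (F i j))).1.length
      · rw [(cIIa i j ht hle).1]
        exact ⟨esel (F i j), by rw [ht]⟩
      · rw [(cIIb i j ht (by omega)).1]
        exact ⟨e₀, by rw [htgt, hsrc]⟩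
    · rw [(cI i j ht).1]
      exact ⟨esel (F i j), hcaseI i j ht⟩
  -- bounds
  · intro i j
    by_cases ht : tgt (esel (F i j)) = u
    · by_cases hle : G i j ≤ (label (esel (F i j))).1.length
      · obtain ⟨hfa, hga⟩ := cIIa i j ht hle
        rw [hfa, hga]
        exact ⟨(h2 i j).1, hle⟩
      · obtain ⟨hfa, hga⟩ := cIIb i j ht (by omega)
        rw [hfa, hga]
        have hb := (h2 i j).2
        rw [hFlen i j ht] at hb
        constructor
        · omega
        · show G i j - (label (esel (F i j))).1.length ≤ (label e₀).1.length
          omega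
    · obtain ⟨hfa, hga⟩ := cI i j ht
      rw [hfa, hga]
      exact h2 i j
  -- step inside bar
  · intro i j hlt
    by_cases ht : tgt (esel (F i j)) = u
    · by_cases hle : G i j ≤ (label (esel (F i j))).1.length
      · obtain ⟨hfa, hga⟩ := cIIa i j ht hle
        rw [hfa, hga] at hlt ⊢
        have hlt' : G i j < (label (esel (F i j))).1.length := hlt
        obtain ⟨hGa, hFa⟩ := h3 i j (by rw [hFlen i j ht]; omega)
        have hsame : esel (F (i+1) j) = esel (F i j) := by rw [hFa]
        obtain ⟨hfb, hgb⟩ := cIIa (i+1) j (by rw [hsame]; exact ht)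
          (by rw [hsame, hGa]; omega)
        rw [hfb, hgb, hGa, hsame]
        exact ⟨rfl, rfl⟩
      · obtain ⟨hfa, hga⟩ := cIIb i j ht (by omega)
        rw [hfa, hga] at hlt ⊢
        have hlt' : G i j - (label (esel (F i j))).1.length < (label e₀).1.length := hlt
        obtain ⟨hGa, hFa⟩ := h3 i j (by rw [hFlen i j ht]; omega)
        have hsame : esel (F (i+1) j) = esel (F i j) := by rw [hFa]
        obtain ⟨hfb, hgb⟩ := cIIb (i+1) j (by rw [hsame]; exact ht)
          (by rw [hsame, hGa]; omega)
        rw [hfb, hgb, hGa, hsame]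
        exact ⟨by omega, rfl⟩
    · obtain ⟨hfa, hga⟩ := cI i j ht
      rw [hfa, hga] at hlt ⊢
      obtain ⟨hGa, hFa⟩ := h3 i j hlt
      have hsame : esel (F (i+1) j) = esel (F i j) := by rw [hFa]
      obtain ⟨hfb, hgb⟩ := cI (i+1) j (by rw [hsame]; exact ht)
      rw [hfb, hgb, hGa, hFa]
      exact ⟨rfl, rfl⟩
  -- end of bar
  · intro i j heq
    by_cases ht : tgt (esel (F i j)) = u
    · by_cases hle : G i j ≤ (label (esel (F i j))).1.length
      · obtain ⟨hfa, hga⟩ := cIIa i j ht hle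
        rw [hfa, hga] at heq
        rw [hfa]
        have heq' : G i j = (label (esel (F i j))).1.length := heq
        obtain ⟨hGa, hFa⟩ := h3 i j (by rw [hFlen i j ht]; omega)
        have hsame : esel (F (i+1) j) = esel (F i j) := by rw [hFa]
        obtain ⟨hfb, hgb⟩ := cIIb (i+1) j (by rw [hsame]; exact ht)
          (by rw [hsame, hGa]; omega)
        rw [hfb, hgb, hGa, hsame]
        exact ⟨by omega, rfl⟩
      · obtain ⟨hfa, hga⟩ := cIIb i j ht (by omega)
        rw [hfa, hga] at heq
        rw [hfa]
        have heq' : G i j - (label (esel (F i j))).1.length = (label e₀).1.length := heq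
        have hb := (h2 i j).2
        rw [hFlen i j ht] at hb
        obtain ⟨hGa, hwb⟩ := h4 i j (by rw [hFlen i j ht]; omega)
        obtain ⟨hg1, hw1⟩ := hnext (i+1) j hGa
        refine ⟨hg1, ?_⟩
        have hv : (F i j).e = v := by rw [hcaseII i j ht]
        rw [hw1, ← hwb]
        exact hv.symm
    · obtain ⟨hfa, hga⟩ := cI i j ht
      rw [hfa, hga] at heq
      rw [hfa]
      obtain ⟨hGa, hwb⟩ := h4 i j heq
      obtain ⟨hg1, hw1⟩ := hnext (i+1) j hGa
      exact ⟨hg1, by rw [hw1, ← hwb]⟩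
  -- vertical matching
  · intro i j
    have hcell : ∀ i j, (ff i j).n[gg i j - 1]? = (F i j).n[G i j - 1]? ∧
        (ff i j).s[gg i j - 1]? = (F i j).s[G i j - 1]? := by
      intro i j
      by_cases ht : tgt (esel (F i j)) = u
      · have hl2 := hlab (esel (F i j))
        have hG1 := (h2 i j).1
        by_cases hle : G i j ≤ (label (esel (F i j))).1.length
        · obtain ⟨hfa, hga⟩ := cIIa i j ht hle
          rw [hfa, hga]
          constructor
          · conv_rhs => rw [hcaseII i j ht]
            show ((label (esel (F i j))).1)[G i j - 1]? =
              ((label (esel (F i j))).1 ++ (label e₀).1)[G i j - 1]?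
            exact (List.getElem?_append_left (by omega)).symm
          · conv_rhs => rw [hcaseII i j ht]
            show ((label (esel (F i j))).2)[G i j - 1]? =
              ((label (esel (F i j))).2 ++ (label e₀).2)[G i j - 1]?
            exact (List.getElem?_append_left (by omega)).symm
        · obtain ⟨hfa, hga⟩ := cIIb i j ht (by omega)
          rw [hfa, hga]
          constructor
          · conv_rhs => rw [hcaseII i j ht]
            show (label e₀).1[G i j - (label (esel (F i j))).1.length - 1]? =
              ((label (esel (F i j))).1 ++ (label e₀).1)[G i j - 1]?
            rw [List.getElem?_append_right (by omega)]
            congr 1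
            omega
          · conv_rhs => rw [hcaseII i j ht]
            show (label e₀).2[G i j - (label (esel (F i j))).1.length - 1]? =
              ((label (esel (F i j))).2 ++ (label e₀).2)[G i j - 1]?
            rw [List.getElem?_append_right (by omega)]
            congr 1
            omega
      · obtain ⟨hfa, hga⟩ := cI i j ht
        rw [hfa, hga]
        exact ⟨rfl, rfl⟩
    rw [(hcell i j).1, (hcell i (j+1)).2]
    exact h5 i j

theorem stmt16 {C V E : Type} [Fintype V] [Fintype E] [DecidableEq V] [DecidableEq E]
    (src tgt : E → V) (label : E → List C × List C)
    (hlab : ∀ e, (label e).1.length = (label e).2.length)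
    (hpos : ∀ e, (label e).1 ≠ [])
    (u v : V) (huv : v ≠ u) (e₀ : E)
    (hsrc : src e₀ = u) (htgt : tgt e₀ = v)
    (hout : ∀ e, src e = u → e = e₀) :
    ((∃ f g, IsBarTiling
        {b : WangBar V C | ∃ e : E, b = ⟨tgt e, src e, (label e).1, (label e).2⟩} f g) ↔
      (∃ f g, IsBarTiling
        {b : WangBar V C | ∃ e : E, e ≠ e₀ ∧
          ((tgt e ≠ u ∧ b = ⟨tgt e, src e, (label e).1, (label e).2⟩) ∨
           (tgt e = u ∧
             b = ⟨v, src e, (label e).1 ++ (label e₀).1, (label e).2 ++ (label e₀).2⟩))} f g)) ∧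
    Fintype.card {w : V // w ≠ u} + 1 = Fintype.card V ∧
    Fintype.card {e : E // e ≠ e₀} + 1 = Fintype.card E := by
  refine ⟨⟨?_, ?_⟩, ?_, ?_⟩
  · rintro ⟨f, g, hfg⟩
    exact stmt16_forward src tgt label hlab hpos u v huv e₀ hsrc htgt hout f g hfg
  · rintro ⟨F, G, hFG⟩
    exact stmt16_backward src tgt label hlab hpos u v huv e₀ hsrc htgt hout F G hFG
  · have h1 : Fintype.card {w : V // w ≠ u} = Fintype.card V - 1 := by
      simp [Fintype.card_subtype_compl]
    have h2 : 0 < Fintype.card V := Fintype.card_pos_iff.mpr ⟨u⟩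
    omega
  · have h1 : Fintype.card {e : E // e ≠ e₀} = Fintype.card E - 1 := by
      simp [Fintype.card_subtype_compl]
    have h2 : 0 < Fintype.card E := Fintype.card_pos_iff.mpr ⟨e₀⟩
    omega
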